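/- The Laurent polynomial z_1 z_2 (1 − z_1)(1 − z_2)(1 − z_1 z_2)(z_1 + 1/z_1 + z_2 + 1/z_2 + z_1 z_2 + 1/(z_1 z_2) − 6) equals 2·g_{41} + 2·g_{32} − g_{33} − 3·g_{42} + g_{43}, where g_{ab} = G_{a,b}(1/z_1, 1/z_2) with G_{a,b} the two-variable Grothendieck polynomial. -/
import Mathlib


/-- The quotient formula for the two-variable Grothendieck polynomial `G_{a,b}`. -/
noncomputable def Gq (a b : ℕ) (u₁ u₂ : ℂ) : ℂ :=
  (1 - u₁⁻¹) ^ (a + 1) * (1 - u₂⁻¹) ^ b / (1 - u₂ / u₁)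
    + (1 - u₂⁻¹) ^ (a + 1) * (1 - u₁⁻¹) ^ b / (1 - u₁ / u₂)

/-- The Laurent polynomial
`z₁ z₂ (1-z₁)(1-z₂)(1-z₁z₂)(z₁ + 1/z₁ + z₂ + 1/z₂ + z₁z₂ + 1/(z₁z₂) - 6)`
equals `2 g₄₁ + 2 g₃₂ - g₃₃ - 3 g₄₂ + g₄₃`, where `g_{ab} = G_{a,b}(1/z₁, 1/z₂)`. -/
theorem stmt12 (z₁ z₂ : ℂ) (hz₁ : z₁ ≠ 0) (hz₂ : z₂ ≠ 0) (hne : z₁ ≠ z₂) :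
    z₁ * z₂ * (1 - z₁) * (1 - z₂) * (1 - z₁ * z₂)
        * (z₁ + z₁⁻¹ + z₂ + z₂⁻¹ + z₁ * z₂ + (z₁ * z₂)⁻¹ - 6)
      = 2 * Gq 4 1 z₁⁻¹ z₂⁻¹ + 2 * Gq 3 2 z₁⁻¹ z₂⁻¹ - Gq 3 3 z₁⁻¹ z₂⁻¹
          - 3 * Gq 4 2 z₁⁻¹ z₂⁻¹ + Gq 4 3 z₁⁻¹ z₂⁻¹ := by
  have hsub : z₂ - z₁ ≠ 0 := sub_ne_zero.mpr (Ne.symm hne)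
  have hsub' : z₁ - z₂ ≠ 0 := sub_ne_zero.mpr hne
  simp only [Gq, inv_inv, inv_div]
  have h1 : (1 : ℂ) - z₂⁻¹ / z₁⁻¹ = (z₂ - z₁) / z₂ := by field_simp
  have h2 : (1 : ℂ) - z₁⁻¹ / z₂⁻¹ = (z₁ - z₂) / z₁ := by field_simp
  rw [h1, h2]
  field_simp
  ring
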